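/- Let (X₁,Y₁),…,(X_{N+1},Y_{N+1}) be exchangeable random variables taking values in 𝒳 × 𝒴, let G ⊆ 𝒳 be a fixed measurable set with P(X_{N+1} ∈ G) > 0, let V : 𝒳 × 𝒴 → ℝ be a measurable score function, and let α ∈ (0,1). Define the group calibration indices I = {i ≤ N : X_i ∈ G} with n = |I|, let η̂_G be the ⌈(1−α)(n+1)⌉-th smallest value among {V(X_i,Y_i) : i ∈ I} (with η̂_G = +∞ if ⌈(1−α)(n+1)⌉ > n), and let C_G(X_{N+1}) = {y : V(X_{N+1}, y) ≤ η̂_G}. Then P(Y_{N+1} ∈ C_G(X_{N+1}) | X_{N+1} ∈ G) ≥ 1 − α. -/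

import Mathlib

open MeasureTheory
open scoped ENNReal

/-- The `k`-th smallest value (1-indexed) of a finite multiset of reals
(`0` if the index is out of range). -/
noncomputable def kthSmallestM (s : Multiset ℝ) (k : ℕ) : ℝ :=
  (s.sort (· ≤ ·)).getD (k - 1) 0

/-- The indices `i ≤ N` of calibration points falling in the group `G`. -/
noncomputable def calIdx {Ω 𝒳 𝒴 : Type*} (N : ℕ) (Z : Fin (N + 1) → Ω → 𝒳 × 𝒴)
    (G : Set 𝒳) (ω : Ω) : Finset (Fin N) :=
  @Finset.filter (Fin N) (fun i => (Z i.castSucc ω).1 ∈ G)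
    (Classical.decPred _) Finset.univ

/-- The group-calibrated conformal threshold `η̂_G`: the `⌈(1−α)(n+1)⌉`-th smallest
score among the calibration points in `G` (where `n` is their number), and `+∞` if
`⌈(1−α)(n+1)⌉ > n`. -/
noncomputable def groupThreshold {Ω 𝒳 𝒴 : Type*} (N : ℕ) (Z : Fin (N + 1) → Ω → 𝒳 × 𝒴)
    (G : Set 𝒳) (V : 𝒳 × 𝒴 → ℝ) (α : ℝ) (ω : Ω) : EReal :=
  if ⌈(1 - α) * ((calIdx N Z G ω).card + 1)⌉₊ ≤ (calIdx N Z G ω).card then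
    ((kthSmallestM ((calIdx N Z G ω).val.map fun i => V (Z i.castSucc ω))
        ⌈(1 - α) * ((calIdx N Z G ω).card + 1)⌉₊ : ℝ) : EReal)
  else ⊤


section KthLemmas


variable (s : Multiset ℝ) (k : ℕ)

lemma kth_count_ge (hk1 : 1 ≤ k) (hk : k ≤ Multiset.card s)
    (p : ℝ → Prop) [DecidablePred p] (hp : ∀ y, y ≤ kthSmallestM s k → p y) :
    k ≤ Multiset.countP p s := by
  set l := s.sort (· ≤ ·) with hl
  have hlen : l.length = Multiset.card s := Multiset.length_sort _
  have hkl : k - 1 < l.length := by omega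
  have hsorted : List.Pairwise (· ≤ ·) l := Multiset.pairwise_sort s _
  have hkth : kthSmallestM s k = l[k-1] := List.getD_eq_getElem l 0 hkl
  have hcnt : Multiset.countP p s = List.countP (fun b => decide (p b)) l := by
    conv_lhs => rw [← Multiset.sort_eq s (· ≤ ·)]
    exact Multiset.coe_countP p l
  rw [hcnt]
  have h1 : List.countP (fun b => decide (p b)) (l.take k) = (l.take k).length := by
    rw [List.countP_eq_length]
    intro a ha
    simp only [decide_eq_true_eq]
    apply hp
    obtain ⟨i, hi, rfl⟩ := List.mem_iff_getElem.1 ha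
    rw [List.getElem_take, hkth]
    have hik : i ≤ k - 1 := by
      have := hi; simp only [List.length_take] at this; omega
    have := hsorted.rel_get_of_le (a := ⟨i, by omega⟩) (b := ⟨k-1, hkl⟩)
      (by simpa using hik)
    simpa using this
  have h2 := List.Sublist.countP_le (p := fun b => decide (p b)) (List.take_sublist k l)
  rw [h1] at h2
  simpa [List.length_take, min_eq_left (by omega : k ≤ l.length)] using h2

lemma kth_count_le (hk1 : 1 ≤ k) (hk : k ≤ Multiset.card s)
    (p : ℝ → Prop) [DecidablePred p] (hp : ∀ y, p y → y < kthSmallestM s k) :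
    Multiset.countP p s ≤ k - 1 := by
  set l := s.sort (· ≤ ·) with hl
  have hlen : l.length = Multiset.card s := Multiset.length_sort _
  have hkl : k - 1 < l.length := by omega
  have hsorted : List.Pairwise (· ≤ ·) l := Multiset.pairwise_sort s _
  have hkth : kthSmallestM s k = l[k-1] := List.getD_eq_getElem l 0 hkl
  have hcnt : Multiset.countP p s = List.countP (fun b => decide (p b)) l := by
    conv_lhs => rw [← Multiset.sort_eq s (· ≤ ·)]
    exact Multiset.coe_countP p l
  rw [hcnt]
  have hsplit : l = l.take (k-1) ++ l.drop (k-1) := (List.take_append_drop _ l).symm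
  have hdrop : List.countP (fun b => decide (p b)) (l.drop (k-1)) = 0 := by
    rw [List.countP_eq_zero]
    intro a ha
    simp only [decide_eq_true_eq]
    intro hpa
    obtain ⟨i, hi, rfl⟩ := List.mem_iff_getElem.1 ha
    have hgd : (l.drop (k-1))[i] = l[(k-1) + i]'(by simp at hi ⊢; omega) :=
      List.getElem_drop
    have hle : l[k-1] ≤ (l.drop (k-1))[i] := by
      rw [hgd]
      have := hsorted.rel_get_of_le (a := ⟨k-1, hkl⟩)
        (b := ⟨(k-1)+i, by simp at hi ⊢; omega⟩) (by simp)
      simpa using this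
    have := hp _ hpa
    rw [hkth] at this
    exact absurd (lt_of_le_of_lt hle this) (lt_irrefl _)
  calc List.countP (fun b => decide (p b)) l
      = List.countP _ (l.take (k-1)) + List.countP _ (l.drop (k-1)) := by
        conv_lhs => rw [hsplit]
        exact List.countP_append
    _ ≤ (l.take (k-1)).length + 0 := by rw [hdrop]; exact Nat.add_le_add_right List.countP_le_length 0
    _ ≤ k - 1 := by simp [List.length_take]

lemma kth_le_iff_count (hk1 : 1 ≤ k) (hk : k ≤ Multiset.card s) (c : ℝ) :
    kthSmallestM s k ≤ c ↔ k ≤ Multiset.countP (fun y => y ≤ c) (s := s) := by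
  classical
  constructor
  · intro h
    exact kth_count_ge s k hk1 hk _ (fun y hy => le_trans hy h)
  · intro h
    by_contra hc
    push_neg at hc
    have := kth_count_le s k hk1 hk (fun y => y ≤ c) (fun y hy => lt_of_le_of_lt hy hc)
    omega

lemma kth_lt_iff_count (hk1 : 1 ≤ k) (hk : k ≤ Multiset.card s) (x : ℝ) :
    kthSmallestM s k < x ↔ k ≤ Multiset.countP (fun y => y < x) (s := s) := by
  classical
  constructor
  · intro h
    exact kth_count_ge s k hk1 hk _ (fun y hy => lt_of_le_of_lt hy h)
  · intro h
    by_contra hc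
    push_neg at hc
    have := kth_count_le s k hk1 hk (fun y => y < x) (fun y hy => lt_of_lt_of_le hy hc)
    omega

lemma count_gt_kth (hk1 : 1 ≤ k) (hk : k ≤ Multiset.card s) :
    Multiset.countP (fun y => kthSmallestM s k < y) s ≤ Multiset.card s - k := by
  classical
  have hsum := Multiset.card_eq_countP_add_countP (fun y => kthSmallestM s k < y) s
  have hnot : Multiset.countP (fun y => ¬ kthSmallestM s k < y) s
      = Multiset.countP (fun y => y ≤ kthSmallestM s k) s := by
    apply Multiset.countP_congr rfl
    intro y _
    simp [not_lt]
  have hge : k ≤ Multiset.countP (fun y => y ≤ kthSmallestM s k) s :=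
    kth_count_ge s k hk1 hk _ (fun y hy => hy)
  omega

end KthLemmas

noncomputable def calIdxW {𝒳 𝒴 : Type*} (N : ℕ) (G : Set 𝒳) (z : Fin (N + 1) → 𝒳 × 𝒴) :
    Finset (Fin N) :=
  @Finset.filter (Fin N) (fun i => (z i.castSucc).1 ∈ G) (Classical.decPred _) Finset.univ

noncomputable def thrW {𝒳 𝒴 : Type*} (N : ℕ) (G : Set 𝒳) (V : 𝒳 × 𝒴 → ℝ) (α : ℝ)
    (z : Fin (N + 1) → 𝒳 × 𝒴) : EReal :=
  if ⌈(1 - α) * ((calIdxW N G z).card + 1)⌉₊ ≤ (calIdxW N G z).card then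
    ((kthSmallestM ((calIdxW N G z).val.map fun i => V (z i.castSucc))
        ⌈(1 - α) * ((calIdxW N G z).card + 1)⌉₊ : ℝ) : EReal)
  else ⊤

def ASet {𝒳 𝒴 : Type*} (N : ℕ) (G : Set 𝒳) : Set (Fin (N + 1) → 𝒳 × 𝒴) :=
  {z | (z (Fin.last N)).1 ∈ G}

def SuccSet {𝒳 𝒴 : Type*} (N : ℕ) (G : Set 𝒳) (V : 𝒳 × 𝒴 → ℝ) (α : ℝ) :
    Set (Fin (N + 1) → 𝒳 × 𝒴) :=
  {z | (V (z (Fin.last N)) : EReal) ≤ thrW N G V α z}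

section Key
variable {𝒳 𝒴 : Type*} (N : ℕ) (G : Set 𝒳) (V : 𝒳 × 𝒴 → ℝ) (α : ℝ)

/-- the embedding `i ↦ swap j last (castSucc i)` -/
noncomputable def fj (j : Fin (N + 1)) : Fin N ↪ Fin (N + 1) :=
  ⟨fun i => Equiv.swap j (Fin.last N) i.castSucc,
   fun a b h => Fin.castSucc_injective _ ((Equiv.swap j (Fin.last N)).injective h)⟩

lemma claimA (z : Fin (N + 1) → 𝒳 × 𝒴) (j : Fin (N + 1)) (hj : (z j).1 ∈ G) :
    (calIdxW N G (z ∘ Equiv.swap j (Fin.last N))).map (fj N j)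
      = (@Finset.filter _ (fun l : Fin (N + 1) => (z l).1 ∈ G)
          (Classical.decPred _) Finset.univ).erase j := by
  classical
  ext l
  simp only [Finset.mem_map, calIdxW, Finset.mem_filter, Finset.mem_univ, true_and,
    Finset.mem_erase, fj, Function.Embedding.coeFn_mk, Function.comp_apply,
    Finset.filter_congr_decidable]
  constructor
  · rintro ⟨i, hiG, rfl⟩
    have hne : Equiv.swap j (Fin.last N) i.castSucc ≠ j := by
      intro h
      have h2 := congrArg (Equiv.swap j (Fin.last N)) h
      rw [Equiv.swap_apply_self, Equiv.swap_apply_left] at h2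
      exact (Fin.castSucc_lt_last i).ne h2
    exact ⟨hne, hiG⟩
  · rintro ⟨hlj, hlG⟩
    have hne : Equiv.swap j (Fin.last N) l ≠ Fin.last N := by
      intro h
      apply hlj
      have h2 := congrArg (Equiv.swap j (Fin.last N)) h
      rwa [Equiv.swap_apply_self, Equiv.swap_apply_right] at h2
    obtain ⟨i, hi⟩ := Fin.exists_castSucc_eq.2 hne
    refine ⟨i, ?_, ?_⟩
    · rw [hi, Equiv.swap_apply_self]; exact hlG
    · show Equiv.swap j (Fin.last N) i.castSucc = l
      rw [hi, Equiv.swap_apply_self]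

lemma claimB (z : Fin (N + 1) → 𝒳 × 𝒴) (j : Fin (N + 1)) (hj : (z j).1 ∈ G) :
    ((calIdxW N G (z ∘ Equiv.swap j (Fin.last N))).val.map
        fun i => V ((z ∘ Equiv.swap j (Fin.last N)) i.castSucc))
      = (((@Finset.filter _ (fun l : Fin (N + 1) => (z l).1 ∈ G)
          (Classical.decPred _) Finset.univ).erase j).val).map fun l => V (z l) := by
  rw [← claimA N G z j hj]
  rw [Finset.map_val, Multiset.map_map]
  rfl

lemma claimC (z : Fin (N + 1) → 𝒳 × 𝒴) (j : Fin (N + 1)) (hj : (z j).1 ∈ G) :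
    (calIdxW N G (z ∘ Equiv.swap j (Fin.last N))).card
      = (@Finset.filter _ (fun l : Fin (N + 1) => (z l).1 ∈ G)
          (Classical.decPred _) Finset.univ).card - 1 := by
  classical
  have := congrArg Finset.card (claimA N G z j hj)
  rw [Finset.card_map, Finset.card_erase_of_mem (by simp [hj])] at this
  simpa using this

lemma key_count (hα : α ∈ Set.Ioo (0 : ℝ) 1) (z : Fin (N + 1) → 𝒳 × 𝒴) :
    (@Finset.filter _ (fun j : Fin (N + 1) =>
        (z ∘ Equiv.swap j (Fin.last N)) ∈ ASet N G \ SuccSet N G V α)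
      (Classical.decPred _) Finset.univ).card
    ≤ (@Finset.filter _ (fun j : Fin (N + 1) => (z j).1 ∈ G)
        (Classical.decPred _) Finset.univ).card
      - ⌈(1 - α) * ((@Finset.filter _ (fun j : Fin (N + 1) => (z j).1 ∈ G)
          (Classical.decPred _) Finset.univ).card : ℝ)⌉₊ := by
  classical
  set FF := @Finset.filter _ (fun j : Fin (N + 1) =>
      (z ∘ Equiv.swap j (Fin.last N)) ∈ ASet N G \ SuccSet N G V α)
    (Classical.decPred _) Finset.univ with hFF
  set J := @Finset.filter _ (fun j : Fin (N + 1) => (z j).1 ∈ G)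
    (Classical.decPred _) Finset.univ with hJ
  set m := J.card with hm
  set k := ⌈(1 - α) * (m : ℝ)⌉₊ with hk
  set S := J.val.map (fun l => V (z l)) with hS
  rcases Nat.eq_zero_or_pos m with hm0 | hm1
  · -- J empty: fail set empty
    have hJe : J = ∅ := Finset.card_eq_zero.1 hm0
    have : FF = ∅ := by
      rw [hFF]
      apply (@Finset.filter_eq_empty_iff _ _ (Classical.decPred _) _).2
      intro j _
      intro hmem
      have hjG : (z j).1 ∈ G := by
        have := hmem.1
        simpa [ASet, Equiv.swap_apply_right] using this
      have : j ∈ J := by simp [hJ, hjG]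
      rw [hJe] at this; simp at this
    rw [this]; simp
  · have hk1 : 1 ≤ k := by
      rw [hk]
      apply Nat.ceil_pos.2
      have : (0:ℝ) < (m:ℝ) := by exact_mod_cast hm1
      nlinarith [hα.2]
    have hkm : k ≤ m := by
      rw [hk, Nat.ceil_le]
      have : (0:ℝ) ≤ (m:ℝ) := by positivity
      nlinarith [hα.1]
    have hcardS : Multiset.card S = m := by rw [hS]; simp [hm]
    set t := kthSmallestM S k with ht
    have hsub : FF ⊆ J.filter (fun j => t < V (z j)) := by
      rw [hFF]
      intro j hjf
      have hjf' := (@Finset.mem_filter _ _ (Classical.decPred _) _ _).1 hjf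
      obtain ⟨-, hjA, hjS⟩ := hjf'
      have hjG : (z j).1 ∈ G := by
        simpa [ASet, Equiv.swap_apply_right] using hjA
      have hjJ : j ∈ J := by simp [hJ, hjG]
      rw [Finset.mem_filter]
      refine ⟨hjJ, ?_⟩
      -- unfold failure of success
      have hVlast : ((z ∘ Equiv.swap j (Fin.last N)) (Fin.last N)) = z j := by
        simp [Equiv.swap_apply_right]
      have hC := claimC N G z j hjG
      have hcard1 : (calIdxW N G (z ∘ Equiv.swap j (Fin.last N))).card = m - 1 := by
        rw [hC]
      have hcast : ((calIdxW N G (z ∘ Equiv.swap j (Fin.last N))).card : ℝ) + 1 = (m : ℝ) := by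
        rw [hcard1]
        have : ((m - 1 : ℕ) : ℝ) = (m : ℝ) - 1 := by
          have : 1 ≤ m := hm1
          push_cast [this]; ring
        rw [this]; ring
      have hkeq : ⌈(1 - α) * (((calIdxW N G (z ∘ Equiv.swap j (Fin.last N))).card : ℝ) + 1)⌉₊ = k := by
        rw [hcast]
      rw [SuccSet, Set.mem_setOf_eq, hVlast, thrW, hkeq] at hjS
      by_cases hcase : k ≤ (calIdxW N G (z ∘ Equiv.swap j (Fin.last N))).card
      · rw [if_pos hcase] at hjS
        set u := ((calIdxW N G (z ∘ Equiv.swap j (Fin.last N))).val.map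
          fun i => V ((z ∘ Equiv.swap j (Fin.last N)) i.castSucc)) with hu
        have hulv : u ≤ S := by
          rw [hu, claimB N G V z j hjG, hS]
          exact Multiset.map_le_map (by rw [Finset.erase_val]; exact Multiset.erase_le _ _)
        have hucard : Multiset.card u = m - 1 := by
          rw [hu]; simpa using hcard1
        have hku : k ≤ Multiset.card u := by rw [hucard]; omega
        have hlt : kthSmallestM u k < V (z j) := by
          rw [EReal.coe_le_coe_iff, not_le] at hjS
          exact hjS
        have hcount : k ≤ Multiset.countP (fun y => y < V (z j)) u :=
          (kth_lt_iff_count u k hk1 hku _).1 hlt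
        have hcountS : k ≤ Multiset.countP (fun y => y < V (z j)) S :=
          le_trans hcount (Multiset.countP_le_of_le _ hulv)
        exact (kth_lt_iff_count S k hk1 (by omega) _).2 hcountS
      · rw [if_neg hcase] at hjS
        exact absurd le_top hjS
    calc FF.card
        ≤ (J.filter (fun j => t < V (z j))).card := Finset.card_le_card hsub
      _ = Multiset.countP (fun y => t < y) S := by
          rw [hS, Multiset.countP_map]
          rfl
      _ ≤ Multiset.card S - k := count_gt_kth S k hk1 (by omega)
      _ = m - k := by rw [hcardS]

end Key


section Meas
variable {𝒳 𝒴 : Type*} [MeasurableSpace 𝒳] [MeasurableSpace 𝒴]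
variable (N : ℕ) (G : Set 𝒳) (V : 𝒳 × 𝒴 → ℝ) (α : ℝ)

lemma mem_calIdxW {z : Fin (N + 1) → 𝒳 × 𝒴} {i : Fin N} :
    i ∈ calIdxW N G z ↔ (z i.castSucc).1 ∈ G := by
  unfold calIdxW
  rw [@Finset.mem_filter _ _ (Classical.decPred _)]
  simp

lemma measurable_ASet (hG : MeasurableSet G) : MeasurableSet (ASet N G (𝒴 := 𝒴)) := by
  have h : Measurable fun z : Fin (N + 1) → 𝒳 × 𝒴 => (z (Fin.last N)).1 :=
    (measurable_pi_apply _).fst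
  exact h hG

lemma measurable_PI (hG : MeasurableSet G) (I : Finset (Fin N)) :
    MeasurableSet {z : Fin (N + 1) → 𝒳 × 𝒴 | calIdxW N G z = I} := by
  have heq : {z : Fin (N + 1) → 𝒳 × 𝒴 | calIdxW N G z = I}
      = ⋂ i : Fin N, {z | ((z i.castSucc).1 ∈ G) ↔ i ∈ I} := by
    ext z
    simp only [Set.mem_setOf_eq, Set.mem_iInter]
    constructor
    · intro h i
      rw [← h, mem_calIdxW]
    · intro h
      ext i
      rw [mem_calIdxW]
      exact h i
  rw [heq]
  apply MeasurableSet.iInter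
  intro i
  have hm : MeasurableSet {z : Fin (N + 1) → 𝒳 × 𝒴 | (z i.castSucc).1 ∈ G} :=
    ((measurable_pi_apply _).fst) hG
  by_cases hiI : i ∈ I
  · simpa [hiI] using hm
  · have h2 := hm.compl
    have heq : {z : Fin (N + 1) → 𝒳 × 𝒴 | (z i.castSucc).1 ∈ G}ᶜ
        = {z | ((z i.castSucc).1 ∈ G) ↔ i ∈ I} := by
      ext z; simp [hiI]
    rwa [heq] at h2

lemma measurable_tI (hV : Measurable V) (I : Finset (Fin N)) (k : ℕ)
    (hk1 : 1 ≤ k) (hk : k ≤ I.card) :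
    Measurable fun z : Fin (N + 1) → 𝒳 × 𝒴 =>
      kthSmallestM (I.val.map fun i => V (z i.castSucc)) k := by
  apply measurable_of_Iic
  intro c
  have hset : (fun z : Fin (N + 1) → 𝒳 × 𝒴 =>
        kthSmallestM (I.val.map fun i => V (z i.castSucc)) k) ⁻¹' Set.Iic c
      = (fun z : Fin (N + 1) → 𝒳 × 𝒴 =>
          (∑ i ∈ I, if V (z i.castSucc) ≤ c then 1 else 0 : ℕ)) ⁻¹' {n | k ≤ n} := by
    ext z
    simp only [Set.mem_preimage, Set.mem_Iic, Set.mem_setOf_eq]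
    rw [kth_le_iff_count _ _ hk1 (by simpa using hk)]
    rw [Multiset.countP_map]
    rw [← Finset.filter_val, ← Finset.card_def, Finset.card_filter]
  rw [hset]
  have hmf : Measurable fun z : Fin (N + 1) → 𝒳 × 𝒴 =>
      (∑ i ∈ I, if V (z i.castSucc) ≤ c then 1 else 0 : ℕ) := by
    apply Finset.measurable_sum
    intro i _
    have hmi : MeasurableSet {z : Fin (N + 1) → 𝒳 × 𝒴 | V (z i.castSucc) ≤ c} :=
      measurableSet_le (hV.comp (measurable_pi_apply _)) measurable_const
    exact Measurable.ite hmi measurable_const measurable_const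
  exact hmf (by trivial)

lemma measurable_SuccSet (hG : MeasurableSet G) (hV : Measurable V)
    (hα : α ∈ Set.Ioo (0 : ℝ) 1) :
    MeasurableSet (SuccSet N G V α) := by
  classical
  set RI : Finset (Fin N) → Set (Fin (N + 1) → 𝒳 × 𝒴) := fun I =>
    if ⌈(1 - α) * ((I.card : ℝ) + 1)⌉₊ ≤ I.card then
      {z | V (z (Fin.last N)) ≤
        kthSmallestM (I.val.map fun i => V (z i.castSucc)) ⌈(1 - α) * ((I.card : ℝ) + 1)⌉₊}
    else Set.univ with hRI
  have hpt : ∀ z : Fin (N + 1) → 𝒳 × 𝒴, z ∈ SuccSet N G V α ↔ z ∈ RI (calIdxW N G z) := by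
    intro z
    rw [SuccSet, Set.mem_setOf_eq, thrW, hRI]
    by_cases h : ⌈(1 - α) * (((calIdxW N G z).card : ℝ) + 1)⌉₊ ≤ (calIdxW N G z).card
    · simp only [h, if_pos, if_true]
      rw [EReal.coe_le_coe_iff]
      rfl
    · simp only [h, if_neg, if_false]
      simp [le_top]
  have hdecomp : SuccSet N G V α = ⋃ I : Finset (Fin N),
      ({z : Fin (N + 1) → 𝒳 × 𝒴 | calIdxW N G z = I} ∩ RI I) := by
    ext z
    simp only [Set.mem_iUnion, Set.mem_inter_iff, Set.mem_setOf_eq]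
    constructor
    · intro h
      exact ⟨calIdxW N G z, rfl, (hpt z).1 h⟩
    · rintro ⟨I, hI, hz⟩
      rw [hpt z, hI]
      exact hz
  rw [hdecomp]
  apply MeasurableSet.iUnion
  intro I
  apply (measurable_PI N G hG I).inter
  rw [hRI]
  by_cases h : ⌈(1 - α) * ((I.card : ℝ) + 1)⌉₊ ≤ I.card
  · simp only [h, if_pos, if_true]
    have hk1 : 1 ≤ ⌈(1 - α) * ((I.card : ℝ) + 1)⌉₊ := by
      apply Nat.ceil_pos.2
      have h1 : (0:ℝ) < 1 - α := by linarith [hα.2]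
      have h2 : (0:ℝ) < (I.card : ℝ) + 1 := by positivity
      positivity
    exact measurableSet_le (hV.comp (measurable_pi_apply _))
      (measurable_tI N V hV I _ hk1 h)
  · simp only [h, if_neg, if_false]
    exact MeasurableSet.univ
end Meas

section KeySum
variable {𝒳 𝒴 : Type*} (N : ℕ) (G : Set 𝒳) (V : 𝒳 × 𝒴 → ℝ) (α : ℝ)

lemma filter_irrel {β : Type*} (p : β → Prop) (h1 h2 : DecidablePred p) (s : Finset β) :
    @Finset.filter _ p h1 s = @Finset.filter _ p h2 s := by
  congr!

lemma key_sum (hα : α ∈ Set.Ioo (0 : ℝ) 1) (z : Fin (N + 1) → 𝒳 × 𝒴) :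
    (∑ j : Fin (N + 1),
        (ASet N G \ SuccSet N G V α).indicator (fun _ => (1 : ℝ≥0∞))
          (z ∘ Equiv.swap j (Fin.last N)))
      ≤ ENNReal.ofReal α * ∑ j : Fin (N + 1),
          (ASet N G).indicator (fun _ => (1 : ℝ≥0∞)) (z ∘ Equiv.swap j (Fin.last N)) := by
  classical
  have hL : (∑ j : Fin (N + 1),
        (ASet N G \ SuccSet N G V α).indicator (fun _ => (1 : ℝ≥0∞))
          (z ∘ Equiv.swap j (Fin.last N)))
      = ((@Finset.filter _ (fun j : Fin (N + 1) =>
          (z ∘ Equiv.swap j (Fin.last N)) ∈ ASet N G \ SuccSet N G V α)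
          (Classical.decPred _) Finset.univ).card : ℝ≥0∞) := by
    rw [← Finset.sum_boole]
    refine Finset.sum_congr rfl fun j _ => ?_
    by_cases h : (z ∘ Equiv.swap j (Fin.last N)) ∈ ASet N G \ SuccSet N G V α
    · simp [Set.indicator_of_mem h, h]
    · simp [Set.indicator_of_notMem h, h]
  have hR : (∑ j : Fin (N + 1),
        (ASet N G).indicator (fun _ => (1 : ℝ≥0∞)) (z ∘ Equiv.swap j (Fin.last N)))
      = ((@Finset.filter _ (fun j : Fin (N + 1) => (z j).1 ∈ G)
          (Classical.decPred _) Finset.univ).card : ℝ≥0∞) := by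
    rw [← Finset.sum_boole]
    refine Finset.sum_congr rfl fun j _ => ?_
    have hmem : (z ∘ Equiv.swap j (Fin.last N)) ∈ ASet N G ↔ (z j).1 ∈ G := by
      simp [ASet, Equiv.swap_apply_right]
    by_cases h : (z j).1 ∈ G
    · simp [Set.indicator_of_mem (hmem.2 h), h]
    · simp [Set.indicator_of_notMem (fun hc => h (hmem.1 hc)), h]
  rw [hL, hR]
  set m := (@Finset.filter _ (fun j : Fin (N + 1) => (z j).1 ∈ G)
      (Classical.decPred _) Finset.univ).card with hm
  set k := ⌈(1 - α) * (m : ℝ)⌉₊ with hk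
  have hcount := key_count N G V α hα z
  rw [← hm, ← hk] at hcount
  calc ((@Finset.filter _ (fun j : Fin (N + 1) =>
          (z ∘ Equiv.swap j (Fin.last N)) ∈ ASet N G \ SuccSet N G V α)
          (Classical.decPred _) Finset.univ).card : ℝ≥0∞)
      ≤ ((m - k : ℕ) : ℝ≥0∞) := by exact_mod_cast hcount
    _ ≤ ENNReal.ofReal α * (m : ℝ≥0∞) := by
        have hreal : ((m - k : ℕ) : ℝ) ≤ α * m := by
          rcases le_or_gt k m with h | h
          · have h1 : ((m - k : ℕ) : ℝ) = (m : ℝ) - (k : ℝ) := by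
              push_cast [h]; ring
            have h2 : (1 - α) * (m : ℝ) ≤ (k : ℝ) := Nat.le_ceil _
            rw [h1]; nlinarith
          · rw [Nat.sub_eq_zero_of_le h.le]
            have : (0:ℝ) ≤ (m:ℝ) := by positivity
            push_cast
            nlinarith [hα.1]
        calc ((m - k : ℕ) : ℝ≥0∞) = ENNReal.ofReal ((m - k : ℕ) : ℝ) := by
              rw [ENNReal.ofReal_natCast]
          _ ≤ ENNReal.ofReal (α * m) := ENNReal.ofReal_le_ofReal hreal
          _ = ENNReal.ofReal α * ENNReal.ofReal (m : ℝ) :=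
              ENNReal.ofReal_mul (le_of_lt hα.1)
          _ = ENNReal.ofReal α * (m : ℝ≥0∞) := by rw [ENNReal.ofReal_natCast]

end KeySum

/-- Group-conditional (equalized) coverage of split conformal prediction calibrated on a
group `G`: if `(X₁,Y₁),…,(X_{N+1},Y_{N+1})` are exchangeable, `G` is measurable with
`P(X_{N+1} ∈ G) > 0`, and `C_G(X_{N+1}) = {y : V(X_{N+1}, y) ≤ η̂_G}`, then
`P(Y_{N+1} ∈ C_G(X_{N+1}) | X_{N+1} ∈ G) ≥ 1 − α`. -/
theorem stmt4 {Ω 𝒳 𝒴 : Type*} [MeasurableSpace Ω] [MeasurableSpace 𝒳] [MeasurableSpace 𝒴]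
    (μ : Measure Ω) [IsProbabilityMeasure μ] (N : ℕ)
    (Z : Fin (N + 1) → Ω → 𝒳 × 𝒴) (hZmeas : ∀ i, Measurable (Z i))
    (hZexch : ∀ σ : Equiv.Perm (Fin (N + 1)),
      μ.map (fun ω => fun i => Z (σ i) ω) = μ.map (fun ω => fun i => Z i ω))
    (G : Set 𝒳) (hG : MeasurableSet G)
    (hpos : 0 < μ {ω | (Z (Fin.last N) ω).1 ∈ G})
    (V : 𝒳 × 𝒴 → ℝ) (hV : Measurable V)
    (α : ℝ) (hα : α ∈ Set.Ioo (0 : ℝ) 1) :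
    ENNReal.ofReal (1 - α) ≤
      (ProbabilityTheory.cond μ {ω | (Z (Fin.last N) ω).1 ∈ G})
        {ω | (Z (Fin.last N) ω).2 ∈
          {y : 𝒴 | ((V ((Z (Fin.last N) ω).1, y) : ℝ) : EReal) ≤
              groupThreshold N Z G V α ω}} := by
  classical
  set T : Ω → (Fin (N + 1) → 𝒳 × 𝒴) := fun ω i => Z i ω with hT
  have hTmeas : Measurable T := measurable_pi_lambda _ (fun i => hZmeas i)
  have hA' : MeasurableSet (ASet N G (𝒴 := 𝒴)) := measurable_ASet N G hG
  have hS' : MeasurableSet (SuccSet N G V α) := measurable_SuccSet N G V α hG hV hα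
  have hF' : MeasurableSet (ASet N G \ SuccSet N G V α) := hA'.diff hS'
  set A : Set Ω := T ⁻¹' ASet N G with hA
  set Sc : Set Ω := T ⁻¹' SuccSet N G V α with hSc
  set F : Set Ω := T ⁻¹' (ASet N G \ SuccSet N G V α) with hF
  have hAmeas : MeasurableSet A := hTmeas hA'
  have hScmeas : MeasurableSet Sc := hTmeas hS'
  have hFmeas : MeasurableSet F := hTmeas hF'
  -- permutation invariance
  have hperm : ∀ (σ : Equiv.Perm (Fin (N + 1))) (S : Set (Fin (N + 1) → 𝒳 × 𝒴)),
      MeasurableSet S →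
      μ ((fun ω => fun i => Z (σ i) ω) ⁻¹' S) = μ (T ⁻¹' S) := by
    intro σ S hS
    have h1 : Measurable (fun ω => fun i => Z (σ i) ω) :=
      measurable_pi_lambda _ (fun i => hZmeas _)
    rw [← Measure.map_apply h1 hS, ← Measure.map_apply hTmeas hS, hZexch σ]
  -- the permuted preimages
  set P : Fin (N + 1) → Set Ω := fun j =>
    (fun ω => T ω ∘ Equiv.swap j (Fin.last N)) ⁻¹' (ASet N G \ SuccSet N G V α) with hP
  set Q : Fin (N + 1) → Set Ω := fun j =>
    (fun ω => T ω ∘ Equiv.swap j (Fin.last N)) ⁻¹' ASet N G with hQ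
  have hgmeas : ∀ j : Fin (N + 1),
      Measurable (fun ω => T ω ∘ Equiv.swap j (Fin.last N)) := fun j =>
    measurable_pi_lambda _ (fun i => hZmeas _)
  have hPmeas : ∀ j, MeasurableSet (P j) := fun j => (hgmeas j) hF'
  have hQmeas : ∀ j, MeasurableSet (Q j) := fun j => (hgmeas j) hA'
  have hPμ : ∀ j, μ (P j) = μ F := fun j => hperm _ _ hF'
  have hQμ : ∀ j, μ (Q j) = μ A := fun j => hperm _ _ hA'
  -- main bound
  have hmain : μ F ≤ ENNReal.ofReal α * μ A := by
    have hsum : ((N + 1 : ℕ) : ℝ≥0∞) * μ F ≤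
        ENNReal.ofReal α * (((N + 1 : ℕ) : ℝ≥0∞) * μ A) := by
      have h1 : ((N + 1 : ℕ) : ℝ≥0∞) * μ F = ∑ j : Fin (N + 1), μ (P j) := by
        rw [Finset.sum_congr rfl (fun j _ => hPμ j)]
        simp [Finset.card_univ, mul_comm]
      have h2 : ((N + 1 : ℕ) : ℝ≥0∞) * μ A = ∑ j : Fin (N + 1), μ (Q j) := by
        rw [Finset.sum_congr rfl (fun j _ => hQμ j)]
        simp [Finset.card_univ, mul_comm]
      rw [h1, h2]
      have h3 : ∑ j : Fin (N + 1), μ (P j)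
          = ∫⁻ ω, ∑ j : Fin (N + 1), (P j).indicator 1 ω ∂μ := by
        rw [lintegral_finset_sum _ (fun j _ => measurable_one.indicator (hPmeas j))]
        exact Finset.sum_congr rfl (fun j _ => (lintegral_indicator_one (hPmeas j)).symm)
      have h4 : ∑ j : Fin (N + 1), μ (Q j)
          = ∫⁻ ω, ∑ j : Fin (N + 1), (Q j).indicator 1 ω ∂μ := by
        rw [lintegral_finset_sum _ (fun j _ => measurable_one.indicator (hQmeas j))]
        exact Finset.sum_congr rfl (fun j _ => (lintegral_indicator_one (hQmeas j)).symm)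
      rw [h3, h4, ← lintegral_const_mul _ (Finset.measurable_sum _
        (fun j _ => measurable_one.indicator (hQmeas j)))]
      apply lintegral_mono
      intro ω
      exact key_sum N G V α hα (T ω)
    have hN0 : ((N + 1 : ℕ) : ℝ≥0∞) ≠ 0 := by simp
    have hNt : ((N + 1 : ℕ) : ℝ≥0∞) ≠ ⊤ := by simp
    have := hsum
    rw [show ENNReal.ofReal α * (((N + 1 : ℕ) : ℝ≥0∞) * μ A)
        = ((N + 1 : ℕ) : ℝ≥0∞) * (ENNReal.ofReal α * μ A) by ring] at this
    exact (ENNReal.mul_le_mul_iff_right hN0 hNt).1 this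
  -- conclude
  have hgoal : ENNReal.ofReal (1 - α) ≤ (ProbabilityTheory.cond μ A) Sc := by
    rw [ProbabilityTheory.cond_apply hAmeas μ Sc, ← ENNReal.div_eq_inv_mul]
    have hμA0 : μ A ≠ 0 := ne_of_gt hpos
    have hμAt : μ A ≠ ⊤ := measure_ne_top μ A
    rw [ENNReal.le_div_iff_mul_le (Or.inl hμA0) (Or.inl hμAt)]
    have hdiff : A \ Sc = F := by
      rw [hA, hSc, hF, ← Set.preimage_diff]
    have hinter : μ (A ∩ Sc) + μ (A \ Sc) = μ A := measure_inter_add_diff A hScmeas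
    have hle : ENNReal.ofReal (1 - α) * μ A + μ F ≤ μ (A ∩ Sc) + μ F := by
      calc ENNReal.ofReal (1 - α) * μ A + μ F
          ≤ ENNReal.ofReal (1 - α) * μ A + ENNReal.ofReal α * μ A :=
            add_le_add_right hmain _
        _ = (ENNReal.ofReal (1 - α) + ENNReal.ofReal α) * μ A := by ring
        _ = μ A := by
            rw [← ENNReal.ofReal_add (by linarith [hα.2]) (le_of_lt hα.1)]
            norm_num
        _ = μ (A ∩ Sc) + μ F := by rw [← hinter, hdiff]
    exact (ENNReal.add_le_add_iff_right (measure_ne_top μ F)).1 hle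
  exact hgoal
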